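/- Let G be a graph without isolated vertices, and let M be a nontrivial, unbounded graph matroid family with rank function r, dimensionality d, and threshold t. Let k be an integer with k ≥ t. If the matroid M(G) is vertically (r(K_k) + 2)-connected, then G is (k+1)-connected. -/

import Mathlib

/-!
Common framework: graph matroid families.

A finite simple graph (without isolated vertices) is identified with its edge
set: a finite set of non-diagonal elements of `Sym2 ℕ`.  A graph matroid
family is encoded, following the paper, as a finitary matroid on the edge set
of the countable complete graph on `ℕ` that is invariant under all
permutations of `ℕ`.
-/

/-- The set of vertices covered by a set of edges. -/
def eSupp (E : Set (Sym2 ℕ)) : Set ℕ := {v : ℕ | ∃ e ∈ E, v ∈ e}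

/-- The edge set of the complete graph on the vertex set `V`. -/
def clique (V : Set ℕ) : Set (Sym2 ℕ) := {e : Sym2 ℕ | ¬ e.IsDiag ∧ ∀ v ∈ e, v ∈ V}

/-- The edge set of the complete graph `K_n` on the vertices `0, …, n-1`. -/
def cliqueN (n : ℕ) : Set (Sym2 ℕ) := clique {v : ℕ | v < n}

/-- `E` is (the edge set of) a finite simple graph. -/
def IsGraph (E : Set (Sym2 ℕ)) : Prop := E.Finite ∧ ∀ e ∈ E, ¬ e.IsDiag

/-- The degree of the vertex `v` in the edge set `E`. -/
noncomputable def deg (E : Set (Sym2 ℕ)) (v : ℕ) : ℕ := {e ∈ E | v ∈ e}.ncard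

/-- The minimum degree of (the graph with) edge set `E` (whose vertex set is `eSupp E`). -/
noncomputable def minDeg (E : Set (Sym2 ℕ)) : ℕ := sInf {k : ℕ | ∃ v ∈ eSupp E, deg E v = k}

/-- Deleting a set `S` of vertices from the graph with edge set `E`. -/
def deleteVerts (E : Set (Sym2 ℕ)) (S : Set ℕ) : Set (Sym2 ℕ) := {e ∈ E | ∀ v ∈ e, v ∉ S}

/-- The graph with edge set `E` is `k`-connected: it has more than `k` vertices and
deleting any set of fewer than `k` vertices leaves a connected graph. -/
def KConnected (k : ℕ) (E : Set (Sym2 ℕ)) : Prop :=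
  k < (eSupp E).ncard ∧
  ∀ S : Finset ℕ, S.card < k →
    ((SimpleGraph.fromEdgeSet E).induce (eSupp E \ ↑S)).Connected

/-- `E` is a forest. -/
def IsForest (E : Set (Sym2 ℕ)) : Prop := (SimpleGraph.fromEdgeSet E).IsAcyclic

/-- `E` is a matching: no two distinct edges of `E` share a vertex. -/
def IsMatching (E : Set (Sym2 ℕ)) : Prop :=
  ∀ e ∈ E, ∀ f ∈ E, e ≠ f → ∀ v : ℕ, v ∈ e → v ∉ f

/-- `E` is a star `K_{1,m}` with `m` edges. -/
def IsStar (m : ℕ) (E : Set (Sym2 ℕ)) : Prop :=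
  ∃ (c : ℕ) (L : Finset ℕ), c ∉ L ∧ L.card = m ∧ E = (fun x => s(c, x)) '' ↑L

/-- `C` is a cycle graph `C_n` for some `n ≥ 3`. -/
def IsCycleGraph (C : Set (Sym2 ℕ)) : Prop :=
  ∃ n : ℕ, 3 ≤ n ∧ ∃ f : ZMod n → ℕ, Function.Injective f ∧
    C = {e : Sym2 ℕ | ∃ i : ZMod n, e = s(f i, f (i + 1))}

/-- The rank of the set `X` in the matroid `M₀`: the supremum of the cardinalities of
independent subsets of `X` (as a natural number; all sets we use are finite). -/
noncomputable def mrk (M₀ : Matroid (Sym2 ℕ)) (X : Set (Sym2 ℕ)) : ℕ :=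
  sSup {n : ℕ | ∃ I ⊆ X, M₀.Indep I ∧ I.ncard = n}

/-- A vertical `k`-separation of the matroid `M₀`. -/
def VerticalSep (M₀ : Matroid (Sym2 ℕ)) (k : ℕ) (E₁ E₂ : Set (Sym2 ℕ)) : Prop :=
  Disjoint E₁ E₂ ∧ E₁ ∪ E₂ = M₀.E ∧
  k ≤ mrk M₀ E₁ ∧ k ≤ mrk M₀ E₂ ∧
  mrk M₀ E₁ + mrk M₀ E₂ + 1 ≤ mrk M₀ M₀.E + k

/-- The matroid `M₀` is vertically `k`-connected. -/
def VerticallyConnected (M₀ : Matroid (Sym2 ℕ)) (k : ℕ) : Prop :=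
  k ≤ mrk M₀ M₀.E ∧
  ∀ k' : ℕ, 0 < k' → k' < k → ∀ E₁ E₂ : Set (Sym2 ℕ), ¬ VerticalSep M₀ k' E₁ E₂

/-- A `d`-dimensional abstract rigidity matroid on the complete graph with vertex set `V`. -/
def IsARM (d : ℕ) (V : Set ℕ) (M₀ : Matroid (Sym2 ℕ)) : Prop :=
  M₀.E = clique V ∧
  (∀ E₁ E₂ : Set (Sym2 ℕ), E₁ ⊆ clique V → E₂ ⊆ clique V →
      (eSupp E₁ ∩ eSupp E₂).ncard < d →
      M₀.closure (E₁ ∪ E₂) = M₀.closure E₁ ∪ M₀.closure E₂) ∧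
  (∀ E₁ E₂ : Set (Sym2 ℕ), E₁ ⊆ clique V → E₂ ⊆ clique V →
      d ≤ (eSupp E₁ ∩ eSupp E₂).ncard →
      M₀.closure E₁ = clique (eSupp E₁) → M₀.closure E₂ = clique (eSupp E₂) →
      M₀.closure (E₁ ∪ E₂) = clique (eSupp E₁ ∪ eSupp E₂))

/-- The `d`-dimensional edge split operation: replace an edge `uv` of `G` by a new
vertex `w` joined to `u` and `v`, as well as to `d - 1` other vertices of `G`. -/
def EdgeSplit (d : ℕ) (G G' : Set (Sym2 ℕ)) : Prop :=
  ∃ (u v w : ℕ) (X : Finset ℕ),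
    s(u, v) ∈ G ∧ w ∉ eSupp G ∧ ↑X ⊆ eSupp G ∧ X.card = d - 1 ∧ u ∉ X ∧ v ∉ X ∧
    G' = (G \ {s(u, v)}) ∪ {s(w, u), s(w, v)} ∪ ((fun x => s(w, x)) '' ↑X)

/-- A graph matroid family: a finitary matroid on the edge set of the countable
complete graph on `ℕ`, invariant under all permutations of `ℕ`. -/
structure GraphMatroidFamily where
  /-- The underlying matroid on the edge set of `K_ℕ`. -/
  M : Matroid (Sym2 ℕ)
  ground_eq : M.E = {e : Sym2 ℕ | ¬ e.IsDiag}
  finitary : M.Finitary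
  invariant : ∀ σ : Equiv.Perm ℕ, ∀ I : Set (Sym2 ℕ),
    M.Indep I → M.Indep (Sym2.map σ '' I)

namespace GraphMatroidFamily

variable (M : GraphMatroidFamily)

/-- The rank function of the family: `M.rk E` is the rank of the matroid `M(G)` for
any graph `G` whose edge set contains `E`. -/
noncomputable def rk (E : Set (Sym2 ℕ)) : ℕ := mrk M.M E

/-- A set of edges (a graph) is `M`-independent. -/
def Indep (E : Set (Sym2 ℕ)) : Prop := M.M.Indep E

/-- `C` is an `M`-circuit: a graph that is not `M`-independent, but such that deleting
any single edge from it yields an `M`-independent graph. -/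
def IsCircuit (C : Set (Sym2 ℕ)) : Prop :=
  IsGraph C ∧ ¬ M.Indep C ∧ ∀ e ∈ C, M.Indep (C \ {e})

/-- The graph with edge set `E` is `M`-rigid. -/
def Rigid (E : Set (Sym2 ℕ)) : Prop := M.rk E = M.rk (clique (eSupp E))

/-- The graph with vertex set `V` and edge set `E` is `M`-rigid. -/
def RigidOn (V : Set ℕ) (E : Set (Sym2 ℕ)) : Prop := M.rk E = M.rk (clique V)

/-- `M` is trivial if every (finite, simple) graph is `M`-independent. -/
def Trivial : Prop := ∀ E : Set (Sym2 ℕ), IsGraph E → M.Indep E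

/-- `M` is unbounded: the sequence `r(K_n)` is unbounded. -/
def Unbounded : Prop := ∀ B : ℕ, ∃ n : ℕ, B < M.rk (cliqueN n)

/-- `M` is bounded: the sequence `r(K_n)` is bounded. -/
def Bounded : Prop := ∃ B : ℕ, ∀ n : ℕ, M.rk (cliqueN n) ≤ B

/-- For a bounded family, `m` is the rank `r(M)` of `M`: the maximum (limit) of the
monotone sequence `r(K_n)`. -/
def HasRank (m : ℕ) : Prop :=
  (∀ n : ℕ, M.rk (cliqueN n) ≤ m) ∧ ∃ n : ℕ, M.rk (cliqueN n) = m

/-- `d` is the dimensionality of (the nontrivial family) `M`: the least `d` such that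
there is an `M`-circuit with minimum degree `d + 1`. -/
def IsDimensionality (d : ℕ) : Prop :=
  IsLeast {d : ℕ | ∃ C, M.IsCircuit C ∧ minDeg C = d + 1} d

/-- `t` is the threshold of (the nontrivial family) `M` with dimensionality `d`:
the least value of `|V(C)| - 1` over all `M`-circuits `C` with minimum degree `d + 1`. -/
def IsThreshold (d t : ℕ) : Prop :=
  IsLeast {t : ℕ | ∃ C, M.IsCircuit C ∧ minDeg C = d + 1 ∧ (eSupp C).ncard = t + 1} t

/-- `M` has the Lovász–Yemini property. -/
def LovaszYemini : Prop :=
  ∃ c : ℕ, ∀ E : Set (Sym2 ℕ), IsGraph E → KConnected c E → M.Rigid E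

/-- `ψ` is an isomorphism between the matroids `M(G)` and `M(H)`. -/
def MatroidIso (G H : Set (Sym2 ℕ)) (ψ : Sym2 ℕ → Sym2 ℕ) : Prop :=
  Set.BijOn ψ G H ∧ ∀ S ⊆ G, (M.Indep S ↔ M.Indep (ψ '' S))

/-- `G` is `M`-reconstructible: every isomorphism between `M(G)` and `M(H)` (for a graph
`H` without isolated vertices) is induced by a graph isomorphism. -/
def Reconstructible (G : Set (Sym2 ℕ)) : Prop :=
  ∀ H : Set (Sym2 ℕ), IsGraph H → ∀ ψ : Sym2 ℕ → Sym2 ℕ, M.MatroidIso G H ψ →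
    ∃ φ : ℕ → ℕ, Set.BijOn φ (eSupp G) (eSupp H) ∧ ∀ e ∈ G, ψ e = Sym2.map φ e

/-- `M` has the Whitney property. -/
def Whitney : Prop :=
  ∃ c : ℕ, ∀ E : Set (Sym2 ℕ), IsGraph E → KConnected c E → M.Reconstructible E

/-- `M` is the union of the graph matroid families `Ms`. -/
def IsUnionOf {k : ℕ} (Ms : Fin k → GraphMatroidFamily) : Prop :=
  ∀ I : Set (Sym2 ℕ),
    M.Indep I ↔ ∃ Is : Fin k → Set (Sym2 ℕ), (∀ i, (Ms i).Indep (Is i)) ∧ I = ⋃ i, Is i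

/-- `M` is a family of `d`-dimensional abstract rigidity matroids. -/
def FamilyOfARM (d : ℕ) : Prop :=
  ∀ n : ℕ, d ≤ n → IsARM d {v : ℕ | v < n} (M.M.restrict (cliqueN n))

/-- `M` is `1`-extendable: its dimensionality `d` is finite and positive, and the
`d`-dimensional edge split operation preserves `M`-independence. -/
def OneExtendable : Prop :=
  ∃ d : ℕ, 0 < d ∧ M.IsDimensionality d ∧
    ∀ G G' : Set (Sym2 ℕ), IsGraph G → M.Indep G → EdgeSplit d G G' → M.Indep G'

/-- `G` is `k`-vertex-redundantly `M`-rigid. -/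
def VertexRedundantlyRigid (k : ℕ) (G : Set (Sym2 ℕ)) : Prop :=
  M.Rigid G ∧ ∀ S : Finset ℕ, ↑S ⊆ eSupp G → S.card ≤ k →
    M.RigidOn (eSupp G \ ↑S) (deleteVerts G ↑S)

end GraphMatroidFamily

/-! ### Auxiliary lemmas -/

section AuxPerm

open Set

/-- Any injection on a finite subset of `ℕ` extends to a permutation of `ℕ`. -/
lemma exists_perm_extend {s : Set ℕ} (hs : s.Finite) {f : ℕ → ℕ} (hf : Set.InjOn f s) :
    ∃ σ : Equiv.Perm ℕ, ∀ x ∈ s, σ x = f x := by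
  classical
  have hs' : (f '' s).Finite := hs.image f
  have hcs : (sᶜ : Set ℕ).Infinite := Set.Finite.infinite_compl hs
  have hct : ((f '' s)ᶜ : Set ℕ).Infinite := Set.Finite.infinite_compl hs'
  have h1 : Infinite (sᶜ : Set ℕ) := hcs.to_subtype
  have h2 : Infinite ((f '' s)ᶜ : Set ℕ) := hct.to_subtype
  obtain ⟨d1⟩ := nonempty_denumerable (sᶜ : Set ℕ)
  obtain ⟨d2⟩ := nonempty_denumerable ((f '' s)ᶜ : Set ℕ)
  let e₁ : s ≃ (f '' s) := Equiv.Set.imageOfInjOn f s hf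
  let e₂ : (sᶜ : Set ℕ) ≃ ((f '' s)ᶜ : Set ℕ) :=
    (@Denumerable.eqv _ d1).trans (@Denumerable.eqv _ d2).symm
  refine ⟨((Equiv.Set.sumCompl s).symm.trans ((e₁.sumCongr e₂).trans
      (Equiv.Set.sumCompl (f '' s)))), fun x hx => ?_⟩
  simp only [Equiv.trans_apply]
  rw [Equiv.Set.sumCompl_symm_apply_of_mem hx]
  simp [e₁, Equiv.Set.imageOfInjOn]

end AuxPerm

section AuxMrk

open Set

variable {M₀ : Matroid (Sym2 ℕ)} {X Y I J : Set (Sym2 ℕ)}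

private lemma mrk_set_bddAbove (hX : X.Finite) :
    BddAbove {n : ℕ | ∃ I ⊆ X, M₀.Indep I ∧ I.ncard = n} := by
  refine ⟨X.ncard, fun n hn => ?_⟩
  obtain ⟨I, hIX, -, rfl⟩ := hn
  exact Set.ncard_le_ncard hIX hX

private lemma mrk_isGreatest (hX : X.Finite) (hI : M₀.IsBasis' I X) :
    IsGreatest {n : ℕ | ∃ I ⊆ X, M₀.Indep I ∧ I.ncard = n} I.ncard := by
  constructor
  · exact ⟨I, hI.subset, hI.indep, rfl⟩
  rintro n ⟨J, hJX, hJ, rfl⟩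
  have hJfin : J.Finite := hX.subset hJX
  have hIfin : I.Finite := hX.subset hI.subset
  have hen : J.encard ≤ I.encard := by
    by_contra hlt
    push_neg at hlt
    obtain ⟨e, he, hins⟩ := hI.indep.augment hJ hlt
    exact he.2 (hI.mem_of_insert_indep (hJX he.1) hins)
  rw [Set.ncard_def, Set.ncard_def]
  exact ENat.toNat_le_toNat hen hIfin.encard_lt_top.ne

lemma Matroid.IsBasis'.mrk_eq (hI : M₀.IsBasis' I X) (hX : X.Finite) : mrk M₀ X = I.ncard :=
  (mrk_isGreatest hX hI).csSup_eq

lemma exists_mrk_basis' (M₀ : Matroid (Sym2 ℕ)) (hX : X.Finite) :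
    ∃ I, M₀.IsBasis' I X ∧ mrk M₀ X = I.ncard ∧ I.Finite ∧ I ⊆ X ∧ M₀.Indep I := by
  obtain ⟨I, hI⟩ := M₀.exists_isBasis' X
  exact ⟨I, hI, hI.mrk_eq hX, hX.subset hI.subset, hI.subset, hI.indep⟩

lemma le_mrk_of_indep (hX : X.Finite) (hIX : I ⊆ X) (hI : M₀.Indep I) :
    I.ncard ≤ mrk M₀ X :=
  le_csSup (mrk_set_bddAbove hX) ⟨I, hIX, hI, rfl⟩

lemma Matroid.Indep.mrk_eq_ncard (hI : M₀.Indep I) (hfin : I.Finite) :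
    mrk M₀ I = I.ncard :=
  (hI.isBasis_self.isBasis').mrk_eq hfin

lemma mrk_le_ncard (hX : X.Finite) : mrk M₀ X ≤ X.ncard := by
  obtain ⟨I, hI, hrk, hfin, hsub, -⟩ := exists_mrk_basis' M₀ hX
  rw [hrk]
  exact Set.ncard_le_ncard hsub hX

lemma mrk_mono (hXY : X ⊆ Y) (hY : Y.Finite) : mrk M₀ X ≤ mrk M₀ Y := by
  obtain ⟨I, hI, hrk, hfin, hsub, hind⟩ := exists_mrk_basis' M₀ (hY.subset hXY)
  rw [hrk]
  exact le_mrk_of_indep hY (hsub.trans hXY) hind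

lemma mrk_empty (M₀ : Matroid (Sym2 ℕ)) : mrk M₀ (∅ : Set (Sym2 ℕ)) = 0 := by
  have h := (M₀.empty_indep.mrk_eq_ncard finite_empty)
  simpa using h

lemma mrk_submod (hX : X.Finite) (hY : Y.Finite) :
    mrk M₀ (X ∪ Y) + mrk M₀ (X ∩ Y) ≤ mrk M₀ X + mrk M₀ Y := by
  obtain ⟨I, hI⟩ := M₀.exists_isBasis' (X ∩ Y)
  obtain ⟨J, hJ, hIJ⟩ := hI.indep.subset_isBasis'_of_subset
    (hI.subset.trans (Set.inter_subset_left.trans Set.subset_union_left))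
  have hJfin : J.Finite := (hX.union hY).subset hJ.subset
  have hIeq : J ∩ (X ∩ Y) = I := by
    refine (hI.eq_of_subset_indep (hJ.indep.inter_right _)
      (subset_inter hIJ hI.subset) Set.inter_subset_right).symm
  have hsplit : (J ∩ X) ∪ (J ∩ Y) = J := by
    rw [← Set.inter_union_distrib_left]
    exact Set.inter_eq_self_of_subset_left hJ.subset
  have hsplit2 : (J ∩ X) ∩ (J ∩ Y) = I := by
    rw [← hIeq]; ext x; simp [Set.mem_inter_iff]; tauto
  have hcard := Set.ncard_union_add_ncard_inter (J ∩ X) (J ∩ Y)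
    (hJfin.inter_of_left _) (hJfin.inter_of_left _)
  rw [hsplit, hsplit2] at hcard
  rw [hJ.mrk_eq (hX.union hY), hI.mrk_eq (hX.inter_of_left _), hcard]
  exact add_le_add (le_mrk_of_indep hX Set.inter_subset_right (hJ.indep.inter_right _))
    (le_mrk_of_indep hY Set.inter_subset_right (hJ.indep.inter_right _))

lemma mrk_union_le (hX : X.Finite) (hY : Y.Finite) :
    mrk M₀ (X ∪ Y) ≤ mrk M₀ X + mrk M₀ Y :=
  le_trans (Nat.le_add_right _ _) (mrk_submod hX hY)

lemma mrk_insert_le (hX : X.Finite) (e : Sym2 ℕ) :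
    mrk M₀ (insert e X) ≤ mrk M₀ X + 1 := by
  have h := mrk_union_le (M₀ := M₀) hX (Set.finite_singleton e)
  have h1 : mrk M₀ {e} ≤ 1 := le_trans (mrk_le_ncard (Set.finite_singleton e)) (by simp)
  calc mrk M₀ (insert e X) = mrk M₀ (X ∪ {e}) := by rw [Set.union_singleton]
  _ ≤ mrk M₀ X + mrk M₀ {e} := h
  _ ≤ mrk M₀ X + 1 := by omega

lemma mrk_le_mrk_insert (hX : X.Finite) (e : Sym2 ℕ) :
    mrk M₀ X ≤ mrk M₀ (insert e X) :=
  mrk_mono (Set.subset_insert e X) (hX.insert e)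

/-- If `e` does not increase the rank of `X`, it does not increase the rank of any
finite superset of `X`. -/
lemma spans_mono (hXY : X ⊆ Y) (hY : Y.Finite) {e : Sym2 ℕ}
    (h : mrk M₀ (insert e X) = mrk M₀ X) :
    mrk M₀ (insert e Y) = mrk M₀ Y := by
  have hX : X.Finite := hY.subset hXY
  refine le_antisymm ?_ (mrk_le_mrk_insert hY e)
  have hsub := mrk_submod (M₀ := M₀) (hX.insert e) hY
  have h1 : (insert e X) ∪ Y = insert e Y := by
    rw [Set.insert_union, Set.union_eq_self_of_subset_left hXY]
  have h2 : X ⊆ (insert e X) ∩ Y := subset_inter (Set.subset_insert e X) hXY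
  have h3 : mrk M₀ X ≤ mrk M₀ ((insert e X) ∩ Y) :=
    mrk_mono h2 ((hX.insert e).inter_of_left _)
  rw [h1, h] at hsub
  omega

/-- If every element of `Y` is spanned by `X`, then `X ∪ Y` has the same rank as `X`. -/
lemma mrk_union_eq_of_spans (hX : X.Finite) (hY : Y.Finite)
    (h : ∀ e ∈ Y, mrk M₀ (insert e X) = mrk M₀ X) :
    mrk M₀ (X ∪ Y) = mrk M₀ X := by
  refine Set.Finite.induction_on (motive := fun Y _ =>
      (∀ e ∈ Y, mrk M₀ (insert e X) = mrk M₀ X) → Y.Finite →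
        mrk M₀ (X ∪ Y) = mrk M₀ X) Y hY (by simp) ?_ h hY
  intro f Y' hfY' hY' ih h' hfin'
  have hXY' : (X ∪ Y').Finite := hX.union hY'
  have ih' := ih (fun e he => h' e (Set.mem_insert_of_mem f he)) hY'
  have hsp : mrk M₀ (insert f (X ∪ Y')) = mrk M₀ (X ∪ Y') :=
    spans_mono (Set.subset_union_left : X ⊆ X ∪ Y') hXY' (h' f (Set.mem_insert f Y'))
  rw [Set.union_insert, hsp, ih']

lemma indep_of_mrk_eq_ncard (hX : X.Finite) (h : mrk M₀ X = X.ncard) : M₀.Indep X := by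
  obtain ⟨I, hI, hrk, hfin, hsub, hind⟩ := exists_mrk_basis' M₀ hX
  have : I = X := Set.eq_of_subset_of_ncard_le hsub (by omega) hX
  rwa [← this]

lemma mrk_lt_ncard_of_dep (hX : X.Finite) (h : ¬ M₀.Indep X) : mrk M₀ X < X.ncard :=
  lt_of_le_of_ne (mrk_le_ncard hX) (fun he => h (indep_of_mrk_eq_ncard hX he))

lemma mrk_restrict_eq {G : Set (Sym2 ℕ)} (hXG : X ⊆ G) :
    mrk (M₀.restrict G) X = mrk M₀ X := by
  unfold mrk
  congr 1
  ext n
  constructor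
  · rintro ⟨I, hIX, hI, rfl⟩
    exact ⟨I, hIX, (Matroid.restrict_indep_iff.1 hI).1, rfl⟩
  · rintro ⟨I, hIX, hI, rfl⟩
    exact ⟨I, hIX, Matroid.restrict_indep_iff.2 ⟨hI, hIX.trans hXG⟩, rfl⟩

end AuxMrk

section AuxGraph

open Set

lemma mem_eSupp_iff {E : Set (Sym2 ℕ)} {v : ℕ} : v ∈ eSupp E ↔ ∃ e ∈ E, v ∈ e := Iff.rfl

lemma mem_eSupp_of_mem {E : Set (Sym2 ℕ)} {e : Sym2 ℕ} {v : ℕ} (he : e ∈ E) (hv : v ∈ e) :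
    v ∈ eSupp E := ⟨e, he, hv⟩

lemma eSupp_mono {E F : Set (Sym2 ℕ)} (h : E ⊆ F) : eSupp E ⊆ eSupp F := by
  rintro v ⟨e, he, hv⟩; exact ⟨e, h he, hv⟩

lemma eSupp_union {E F : Set (Sym2 ℕ)} : eSupp (E ∪ F) = eSupp E ∪ eSupp F := by
  ext v
  constructor
  · rintro ⟨e, he | he, hv⟩
    · exact Or.inl ⟨e, he, hv⟩
    · exact Or.inr ⟨e, he, hv⟩
  · rintro (⟨e, he, hv⟩ | ⟨e, he, hv⟩)
    · exact ⟨e, Or.inl he, hv⟩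
    · exact ⟨e, Or.inr he, hv⟩

@[simp] lemma eSupp_empty : eSupp (∅ : Set (Sym2 ℕ)) = ∅ := by
  ext v; simp [eSupp]

lemma setOf_mem_sym2_finite (e : Sym2 ℕ) : {v : ℕ | v ∈ e}.Finite := by
  induction e with
  | _ a b =>
    have : {v : ℕ | v ∈ s(a, b)} = {a, b} := by
      ext v; simp [Sym2.mem_iff]
    rw [this]
    exact (Set.finite_singleton b).insert a

lemma eSupp_finite {E : Set (Sym2 ℕ)} (hE : E.Finite) : (eSupp E).Finite := by
  have : eSupp E = ⋃ e ∈ E, {v : ℕ | v ∈ e} := by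
    ext v; simp [eSupp]
  rw [this]
  exact hE.biUnion (fun e _ => setOf_mem_sym2_finite e)

lemma eSupp_nonempty {E : Set (Sym2 ℕ)} (hE : E.Nonempty) : (eSupp E).Nonempty := by
  obtain ⟨e, he⟩ := hE
  induction e with
  | _ a b => exact ⟨a, s(a, b), he, by simp⟩

lemma subset_clique_eSupp {E : Set (Sym2 ℕ)} (hE : ∀ e ∈ E, ¬ e.IsDiag) :
    E ⊆ clique (eSupp E) :=
  fun e he => ⟨hE e he, fun v hv => ⟨e, he, hv⟩⟩

lemma clique_mono {V W : Set ℕ} (h : V ⊆ W) : clique V ⊆ clique W :=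
  fun _ he => ⟨he.1, fun v hv => h (he.2 v hv)⟩

lemma clique_nondiag {V : Set ℕ} : ∀ e ∈ clique V, ¬ e.IsDiag := fun _ he => he.1

lemma eSupp_clique_subset (V : Set ℕ) : eSupp (clique V) ⊆ V := by
  rintro v ⟨e, he, hv⟩
  exact he.2 v hv

lemma clique_finite {V : Set ℕ} (hV : V.Finite) : (clique V).Finite := by
  have h : clique V ⊆ (fun p : ℕ × ℕ => s(p.1, p.2)) '' (V ×ˢ V) := by
    intro e he
    induction e with
    | _ a b => exact ⟨(a, b), ⟨he.2 a (by simp), he.2 b (by simp)⟩, rfl⟩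
  exact ((hV.prod hV).image _).subset h

lemma clique_insert {V : Set ℕ} {x : ℕ} (hx : x ∉ V) :
    clique (insert x V) = clique V ∪ (fun u => s(x, u)) '' V := by
  ext e
  constructor
  · rintro ⟨hnd, hmem⟩
    induction e with
    | _ a b =>
      have ha := hmem a (by simp)
      have hb := hmem b (by simp)
      have hab : a ≠ b := fun h => hnd (by simp [h])
      rcases ha with rfl | ha
      · rcases hb with rfl | hb
        · exact absurd rfl hab
        · exact Or.inr ⟨b, hb, rfl⟩
      · rcases hb with rfl | hb
        · exact Or.inr ⟨a, ha, Sym2.eq_swap⟩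
        · exact Or.inl ⟨hnd, by intro v hv; rcases Sym2.mem_iff.1 hv with rfl | rfl <;> simp [ha, hb]⟩
  · rintro (⟨hnd, hmem⟩ | ⟨u, hu, rfl⟩)
    · exact ⟨hnd, fun v hv => Set.mem_insert_of_mem x (hmem v hv)⟩
    · refine ⟨by simp [Sym2.mk_isDiag_iff]; rintro rfl; exact hx hu, ?_⟩
      intro v hv
      rcases Sym2.mem_iff.1 hv with rfl | rfl
      · exact Set.mem_insert _ _
      · exact Set.mem_insert_of_mem _ hu

lemma star_injOn (x : ℕ) : Set.InjOn (fun u => s(x, u)) {u : ℕ | True} := by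
  intro a _ b _ h
  exact Sym2.congr_right.1 h

lemma star_ncard {N : Set ℕ} (x : ℕ) : ((fun u => s(x, u)) '' N).ncard = N.ncard :=
  Set.ncard_image_of_injective N (fun a b h => Sym2.congr_right.1 h)

lemma star_finite {N : Set ℕ} (hN : N.Finite) (x : ℕ) : ((fun u => s(x, u)) '' N).Finite :=
  hN.image _

lemma eSupp_star_subset {N : Set ℕ} (x : ℕ) :
    eSupp ((fun u => s(x, u)) '' N) ⊆ insert x N := by
  rintro v ⟨e, ⟨u, hu, rfl⟩, hv⟩
  rcases Sym2.mem_iff.1 hv with rfl | rfl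
  · exact Set.mem_insert _ _
  · exact Set.mem_insert_of_mem _ hu

lemma star_nondiag {N : Set ℕ} {x : ℕ} (hx : x ∉ N) :
    ∀ e ∈ (fun u => s(x, u)) '' N, ¬ e.IsDiag := by
  rintro e ⟨u, hu, rfl⟩ hdiag
  rw [Sym2.mk_isDiag_iff] at hdiag
  exact hx (hdiag ▸ hu)

/-- The image of a clique under a permutation. -/
lemma image_clique (σ : Equiv.Perm ℕ) (V : Set ℕ) :
    Sym2.map σ '' clique V = clique (σ '' V) := by
  ext e
  constructor
  · rintro ⟨f, ⟨hnd, hmem⟩, rfl⟩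
    induction f with
    | _ a b =>
      rw [Sym2.map_pair_eq]
      refine ⟨?_, ?_⟩
      · rw [Sym2.mk_isDiag_iff]
        intro h
        exact hnd (by simp [Sym2.mk_isDiag_iff, σ.injective h])
      · intro v hv
        rcases Sym2.mem_iff.1 hv with rfl | rfl
        · exact ⟨a, hmem a (by simp), rfl⟩
        · exact ⟨b, hmem b (by simp), rfl⟩
  · intro he
    induction e with
    | _ c d =>
      obtain ⟨a, ha, rfl⟩ := he.2 c (by simp)
      obtain ⟨b, hb, rfl⟩ := he.2 d (by simp)
      refine ⟨s(a, b), ⟨?_, ?_⟩, by rw [Sym2.map_pair_eq]⟩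
      · rw [Sym2.mk_isDiag_iff]
        intro h
        exact he.1 (by simp [Sym2.mk_isDiag_iff, h])
      · intro v hv
        rcases Sym2.mem_iff.1 hv with rfl | rfl
        · exact ha
        · exact hb

lemma image_image_symm (σ : Equiv.Perm ℕ) (X : Set (Sym2 ℕ)) :
    Sym2.map ⇑σ.symm '' (Sym2.map ⇑σ '' X) = X := by
  rw [Set.image_image]
  have : ∀ z : Sym2 ℕ, Sym2.map ⇑σ.symm (Sym2.map ⇑σ z) = z := by
    intro z
    rw [Sym2.map_map]
    have : (⇑σ.symm ∘ ⇑σ) = id := by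
      funext u; simp
    rw [this, Sym2.map_id, id_eq]
  simp only [this, Set.image_id']

end AuxGraph

namespace GraphMatroidFamily

open Set

variable {M : GraphMatroidFamily}

lemma indep_image_iff (σ : Equiv.Perm ℕ) {I : Set (Sym2 ℕ)} :
    M.M.Indep (Sym2.map σ '' I) ↔ M.M.Indep I := by
  refine ⟨fun h => ?_, fun h => M.invariant σ I h⟩
  have := M.invariant σ.symm _ h
  rwa [image_image_symm] at this

lemma mrk_image_perm (σ : Equiv.Perm ℕ) {X : Set (Sym2 ℕ)} (hX : X.Finite) :
    mrk M.M (Sym2.map σ '' X) = mrk M.M X := by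
  have key : ∀ (τ : Equiv.Perm ℕ) (Y : Set (Sym2 ℕ)), Y.Finite →
      mrk M.M Y ≤ mrk M.M (Sym2.map τ '' Y) := by
    intro τ Y hY
    obtain ⟨I, hI, hrk, hfin, hsub, hind⟩ := exists_mrk_basis' M.M hY
    rw [hrk]
    have h1 : Sym2.map ⇑τ '' I ⊆ Sym2.map ⇑τ '' Y := Set.image_mono hsub
    have h2 : M.M.Indep (Sym2.map ⇑τ '' I) := M.invariant τ I hind
    have h3 : (Sym2.map ⇑τ '' I).ncard = I.ncard :=
      Set.ncard_image_of_injective I (Sym2.map.injective τ.injective)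
    rw [← h3]
    exact le_mrk_of_indep (hY.image _) h1 h2
  refine le_antisymm ?_ (key σ X hX)
  have := key σ.symm (Sym2.map ⇑σ '' X) (hX.image _)
  rwa [image_image_symm] at this

/-- The rank of a clique only depends on the number of vertices. -/
lemma mrk_clique_eq_rho {V : Set ℕ} (hV : V.Finite) :
    mrk M.M (clique V) = mrk M.M (cliqueN V.ncard) := by
  have htgt : ({v : ℕ | v < V.ncard}).Finite := Set.finite_Iio _
  have hcard : V.encard = ({v : ℕ | v < V.ncard}).encard := by
    have h1 : ({v : ℕ | v < V.ncard} : Set ℕ) = ↑(Finset.range V.ncard) := by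
      ext v; simp
    rw [h1, Set.encard_coe_eq_coe_finsetCard, Finset.card_range, hV.encard_eq_coe,
      ← Set.ncard_def]
  obtain ⟨f, hf⟩ := hV.exists_bijOn_of_encard_eq hcard
  obtain ⟨σ, hσ⟩ := exists_perm_extend hV hf.injOn
  have himg : σ '' V = {v : ℕ | v < V.ncard} := by
    rw [Set.image_congr hσ]
    exact hf.image_eq
  have := mrk_image_perm (M := M) σ (clique_finite hV)
  rw [image_clique, himg] at this
  exact this.symm

end GraphMatroidFamily

section AuxDeg

open Set

lemma deg_def (E : Set (Sym2 ℕ)) (v : ℕ) : deg E v = {e ∈ E | v ∈ e}.ncard := rfl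

lemma encard_eq_of_ncard_eq {s t : Set ℕ} (hs : s.Finite) (ht : t.Finite)
    (h : s.ncard = t.ncard) : s.encard = t.encard := by
  rw [hs.encard_eq_coe, ht.encard_eq_coe, ← Set.ncard_def, ← Set.ncard_def, h]

lemma deg_mono {E F : Set (Sym2 ℕ)} {v : ℕ} (h : E ⊆ F) (hF : F.Finite) :
    deg E v ≤ deg F v := by
  rw [deg_def, deg_def]
  exact Set.ncard_le_ncard (fun e he => ⟨h he.1, he.2⟩) (hF.subset (fun e he => he.1))

lemma deg_eq_zero_of_not_mem_eSupp {E : Set (Sym2 ℕ)} {v : ℕ} (h : v ∉ eSupp E) :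
    deg E v = 0 := by
  rw [deg_def]
  have : {e ∈ E | v ∈ e} = ∅ := by
    ext e; simp only [Set.mem_setOf_eq, Set.mem_empty_iff_false, iff_false, not_and]
    exact fun he hv => h ⟨e, he, hv⟩
  simp [this]

lemma deg_pos {E : Set (Sym2 ℕ)} {v : ℕ} (hE : E.Finite) (h : v ∈ eSupp E) :
    0 < deg E v := by
  obtain ⟨e, he, hv⟩ := h
  rw [deg_def]
  exact (Set.ncard_pos (hE.subset (fun f hf => hf.1))).2 ⟨e, he, hv⟩

lemma minDeg_le_deg {E : Set (Sym2 ℕ)} {v : ℕ} (h : v ∈ eSupp E) :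
    minDeg E ≤ deg E v := Nat.sInf_le ⟨v, h, rfl⟩

lemma exists_deg_eq_minDeg {E : Set (Sym2 ℕ)} (h : (eSupp E).Nonempty) :
    ∃ v ∈ eSupp E, deg E v = minDeg E := by
  have hne : {k : ℕ | ∃ v ∈ eSupp E, deg E v = k}.Nonempty := ⟨deg E h.choose, h.choose, h.choose_spec, rfl⟩
  exact Nat.sInf_mem hne

end AuxDeg

namespace GraphMatroidFamily

open Set

variable {M : GraphMatroidFamily} {d t : ℕ}

lemma IsCircuit.nonempty' {C : Set (Sym2 ℕ)} (hC : M.IsCircuit C) : C.Nonempty := by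
  rcases Set.eq_empty_or_nonempty C with rfl | h
  · exact absurd M.M.empty_indep hC.2.1
  · exact h

lemma exists_circuit_subset (M : GraphMatroidFamily) {D : Set (Sym2 ℕ)} (hfin : D.Finite)
    (hgr : ∀ e ∈ D, ¬ e.IsDiag) (hdep : ¬ M.M.Indep D) :
    ∃ C ⊆ D, M.IsCircuit C := by
  classical
  have hne : {n : ℕ | ∃ C ⊆ D, ¬ M.M.Indep C ∧ C.ncard = n}.Nonempty :=
    ⟨D.ncard, D, subset_rfl, hdep, rfl⟩
  obtain ⟨C, hCD, hCdep, hCcard⟩ := Nat.sInf_mem hne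
  refine ⟨C, hCD, ⟨⟨hfin.subset hCD, fun e he => hgr e (hCD he)⟩, hCdep, ?_⟩⟩
  intro e he
  by_contra hdep'
  have hmem : (C \ {e}).ncard ∈ {n : ℕ | ∃ C ⊆ D, ¬ M.M.Indep C ∧ C.ncard = n} :=
    ⟨C \ {e}, Set.diff_subset.trans hCD, hdep', rfl⟩
  have hCfin : C.Finite := hfin.subset hCD
  have hlt : (C \ {e}).ncard < C.ncard := by
    rw [Set.ncard_diff_singleton_of_mem he]
    have : 0 < C.ncard := (Set.ncard_pos hCfin).2 ⟨e, he⟩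
    omega
  have := Nat.sInf_le hmem
  omega

lemma circuit_deg_ge (hdim : M.IsDimensionality d) {C : Set (Sym2 ℕ)} (hC : M.IsCircuit C)
    {v : ℕ} (hv : v ∈ eSupp C) : d + 1 ≤ deg C v := by
  have hne := eSupp_nonempty hC.nonempty'
  obtain ⟨v₀, hv₀, hdeg₀⟩ := exists_deg_eq_minDeg hne
  have h1 : 0 < minDeg C := hdeg₀ ▸ deg_pos hC.1.1 hv₀
  have hmem : minDeg C - 1 ∈ {d' : ℕ | ∃ C', M.IsCircuit C' ∧ minDeg C' = d' + 1} :=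
    ⟨C, hC, by omega⟩
  have hd2 := hdim.2 hmem
  have := minDeg_le_deg hv
  omega

/-- Adding an edge at a vertex of degree `< d` increases the rank. -/
lemma mrk_insert_fresh (hdim : M.IsDimensionality d) {X : Set (Sym2 ℕ)} (hX : X.Finite)
    (hgr : ∀ e ∈ X, ¬ e.IsDiag) {x y : ℕ} (hxy : x ≠ y) (hdeg : deg X x < d)
    (hem : s(x, y) ∉ X) :
    mrk M.M (insert s(x, y) X) = mrk M.M X + 1 := by
  refine le_antisymm (mrk_insert_le hX _) ?_
  obtain ⟨I, hI, hrk, hfin, hsub, hind⟩ := exists_mrk_basis' M.M hX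
  by_cases hii : M.M.Indep (insert s(x, y) I)
  · have h1 : (insert s(x, y) I).ncard = I.ncard + 1 :=
      Set.ncard_insert_of_notMem (fun h => hem (hsub h)) hfin
    have h2 := le_mrk_of_indep (hX.insert _) (Set.insert_subset_insert hsub) hii
    omega
  · exfalso
    have hgr' : ∀ e ∈ insert s(x, y) I, ¬ e.IsDiag := by
      rintro e (rfl | he)
      · simpa [Sym2.mk_isDiag_iff] using hxy
      · exact hgr e (hsub he)
    obtain ⟨C, hCsub, hC⟩ := exists_circuit_subset M (hfin.insert _) hgr' hii
    have heC : s(x, y) ∈ C := by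
      by_contra hne'
      have hCI : C ⊆ I := by
        intro f hf
        rcases hCsub hf with rfl | hfI
        · exact absurd hf hne'
        · exact hfI
      exact hC.2.1 (hind.subset hCI)
    have hxC : x ∈ eSupp C := ⟨s(x, y), heC, by simp⟩
    have hdegC := circuit_deg_ge hdim hC hxC
    have hCfin : C.Finite := hC.1.1
    have h3 : {f ∈ C | x ∈ f} ⊆ insert s(x, y) {f ∈ I | x ∈ f} := by
      rintro f ⟨hf, hxf⟩
      rcases hCsub hf with rfl | hfI
      · exact Set.mem_insert _ _
      · exact Set.mem_insert_of_mem _ ⟨hfI, hxf⟩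
    have h4 : deg C x ≤ deg I x + 1 := by
      rw [deg_def, deg_def]
      refine le_trans (Set.ncard_le_ncard h3 ((hfin.subset (fun f hf => hf.1)).insert _)) ?_
      exact Set.ncard_insert_le _ _
    have h5 : deg I x ≤ deg X x := deg_mono hsub hX
    omega

/-- Adding at most `d` star edges at a fresh vertex increases the rank by their number. -/
lemma mrk_union_star (hdim : M.IsDimensionality d) {X : Set (Sym2 ℕ)} (hX : X.Finite)
    (hgr : ∀ e ∈ X, ¬ e.IsDiag) {x : ℕ} (hx : x ∉ eSupp X) {N : Set ℕ}
    (hN : N.Finite) (hNd : N.ncard ≤ d) (hxN : x ∉ N) :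
    mrk M.M (X ∪ (fun u => s(x, u)) '' N) = mrk M.M X + N.ncard := by
  refine Set.Finite.induction_on (motive := fun N _ => N.Finite → N.ncard ≤ d → x ∉ N →
      mrk M.M (X ∪ (fun u => s(x, u)) '' N) = mrk M.M X + N.ncard) N hN
    (by simp) ?_ hN hNd hxN
  intro u N' huN' hN'fin ih _ hcard hxN'
  have hxu : x ≠ u := fun h => hxN' (h ▸ Set.mem_insert _ _)
  have hxN'' : x ∉ N' := fun h => hxN' (Set.mem_insert_of_mem _ h)
  have hcard' : (insert u N').ncard = N'.ncard + 1 := Set.ncard_insert_of_notMem huN' hN'fin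
  have ih' := ih hN'fin (by omega) hxN''
  have hstarfin := star_finite hN'fin x
  have hYfin : (X ∪ (fun u => s(x, u)) '' N').Finite := hX.union hstarfin
  have hgrY : ∀ e ∈ X ∪ (fun u => s(x, u)) '' N', ¬ e.IsDiag := by
    rintro e (he | he)
    · exact hgr e he
    · exact star_nondiag hxN'' e he
  have hdegY : deg (X ∪ (fun u => s(x, u)) '' N') x = N'.ncard := by
    rw [deg_def]
    have hset : {e ∈ X ∪ (fun u => s(x, u)) '' N' | x ∈ e} = (fun u => s(x, u)) '' N' := by
      ext e
      constructor
      · rintro ⟨he | he, hxe⟩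
        · exact absurd ⟨e, he, hxe⟩ hx
        · exact he
      · rintro ⟨w, hw, rfl⟩
        exact ⟨Or.inr ⟨w, hw, rfl⟩, by simp⟩
    rw [hset, star_ncard]
  have hmem : s(x, u) ∉ X ∪ (fun u => s(x, u)) '' N' := by
    rintro (he | ⟨w, hw, hwe⟩)
    · exact hx ⟨_, he, by simp⟩
    · exact huN' ((Sym2.congr_right.1 hwe) ▸ hw)
  have hfresh := mrk_insert_fresh hdim hYfin hgrY hxu (by omega) hmem
  rw [Set.image_insert_eq, Set.union_insert, hfresh, ih', hcard']
  omega

end GraphMatroidFamily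

namespace GraphMatroidFamily

open Set

variable {M : GraphMatroidFamily} {d t : ℕ}

/-- The absorption lemma: if `|W| ≥ t` then the clique on `W` together with `d` edges
from a new vertex `x` into `W` spans every edge from `x` to `W`. -/
lemma absorb_edge (hdim : M.IsDimensionality d) (hth : M.IsThreshold d t)
    {W : Set ℕ} (hWfin : W.Finite) (htW : t ≤ W.ncard) {x w : ℕ} (hx : x ∉ W) (hw : w ∈ W)
    {N : Set ℕ} (hNW : N ⊆ W) (hNd : N.ncard = d) (hwN : w ∉ N) :
    mrk M.M (insert s(x, w) (clique W ∪ (fun u => s(x, u)) '' N)) =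
      mrk M.M (clique W ∪ (fun u => s(x, u)) '' N) := by
  classical
  obtain ⟨C₀, hC₀, hmd, hsupp⟩ := hth.1
  have hC₀fin : C₀.Finite := hC₀.1.1
  have hsfin : (eSupp C₀).Finite := eSupp_finite hC₀fin
  have hsne : (eSupp C₀).Nonempty := eSupp_nonempty hC₀.nonempty'
  obtain ⟨v, hv, hdegv⟩ := exists_deg_eq_minDeg hsne
  rw [hmd] at hdegv
  -- the neighbourhood of `v` in `C₀`
  set NB := {u : ℕ | s(v, u) ∈ C₀} with hNBdef
  have hNBsupp : NB ⊆ eSupp C₀ := fun u hu => ⟨s(v, u), hu, by simp⟩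
  have hNBfin : NB.Finite := hsfin.subset hNBsupp
  have hvNB : v ∉ NB := fun h => hC₀.1.2 _ h (by simp [Sym2.mk_isDiag_iff])
  have hEv : {e ∈ C₀ | v ∈ e} = (fun u => s(v, u)) '' NB := by
    ext f
    constructor
    · rintro ⟨hf, hvf⟩
      obtain ⟨u, rfl⟩ := Sym2.mem_iff_exists.1 hvf
      exact ⟨u, hf, rfl⟩
    · rintro ⟨u, hu, rfl⟩
      exact ⟨hu, by simp⟩
  have hNBcard : NB.ncard = d + 1 := by
    have h1 := star_ncard (N := NB) v
    rw [deg_def, hEv, h1] at hdegv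
    exact hdegv
  -- the target neighbourhood
  set T := insert w N with hTdef
  have hTW : T ⊆ W := Set.insert_subset hw hNW
  have hNfin : N.Finite := hWfin.subset hNW
  have hTfin : T.Finite := hNfin.insert w
  have hTcard : T.ncard = d + 1 := by
    rw [hTdef, Set.ncard_insert_of_notMem hwN hNfin, hNd]
  obtain ⟨g, hg⟩ := hNBfin.exists_bijOn_of_encard_eq
    (encard_eq_of_ncard_eq hNBfin hTfin (by rw [hNBcard, hTcard]))
  -- the remaining vertices
  set R := eSupp C₀ \ insert v NB with hRdef
  have hRfin : R.Finite := hsfin.diff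
  have hvNBsupp : insert v NB ⊆ eSupp C₀ := Set.insert_subset hv hNBsupp
  have hvNBcard : (insert v NB).ncard = d + 2 := by
    rw [Set.ncard_insert_of_notMem hvNB hNBfin, hNBcard]
  have hdt : d + 2 ≤ t + 1 := by
    rw [← hsupp, ← hvNBcard]
    exact Set.ncard_le_ncard hvNBsupp hsfin
  have hRcard : R.ncard = t + 1 - (d + 2) := by
    rw [hRdef, Set.ncard_diff hvNBsupp ((hsfin.subset hvNBsupp)), hsupp, hvNBcard]
  set TG := W \ T with hTGdef
  have hTGfin : TG.Finite := hWfin.diff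
  have hTGcard : TG.ncard = W.ncard - (d + 1) := by
    rw [hTGdef, Set.ncard_diff hTW hTfin, hTcard]
  have hle : R.ncard ≤ TG.ncard := by omega
  obtain ⟨T', hT'sub, hT'card⟩ := Set.exists_subset_card_eq hle
  have hT'fin : T'.Finite := hTGfin.subset hT'sub
  obtain ⟨g₂, hg₂⟩ := hRfin.exists_bijOn_of_encard_eq
    (encard_eq_of_ncard_eq hRfin hT'fin hT'card.symm)
  -- the embedding
  set φ : ℕ → ℕ := fun z => if z = v then x else if z ∈ NB then g z else g₂ z with hφdef
  have hφv : φ v = x := by simp [hφdef]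
  have hφNB : ∀ z ∈ NB, φ z = g z := by
    intro z hz
    have : z ≠ v := fun h => hvNB (h ▸ hz)
    simp [hφdef, this, hz]
  have hφR : ∀ z ∈ R, φ z = g₂ z := by
    intro z hz
    have h1 : z ≠ v := fun h => hz.2 (h ▸ Set.mem_insert _ _)
    have h2 : z ∉ NB := fun h => hz.2 (Set.mem_insert_of_mem _ h)
    simp [hφdef, h1, h2]
  have hclass : ∀ z ∈ eSupp C₀, (z = v ∧ φ z = x) ∨ (z ∈ NB ∧ φ z ∈ T) ∨
      (z ∈ R ∧ φ z ∈ T') := by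
    intro z hz
    by_cases h1 : z = v
    · exact Or.inl ⟨h1, h1 ▸ hφv⟩
    by_cases h2 : z ∈ NB
    · exact Or.inr (Or.inl ⟨h2, (hφNB z h2) ▸ hg.mapsTo h2⟩)
    · have hzR : z ∈ R := ⟨hz, by simp [h1, h2]⟩
      exact Or.inr (Or.inr ⟨hzR, (hφR z hzR) ▸ hg₂.mapsTo hzR⟩)
  have hT'T : ∀ z ∈ T', z ∉ T := fun z hz => (hT'sub hz).2
  have hT'W : T' ⊆ W := fun z hz => (hT'sub hz).1
  have hφinj : Set.InjOn φ (eSupp C₀) := by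
    intro z₁ hz₁ z₂ hz₂ heq
    rcases hclass z₁ hz₁ with ⟨hz₁v, he₁⟩ | ⟨hm₁, he₁⟩ | ⟨hm₁, he₁⟩ <;>
      rcases hclass z₂ hz₂ with ⟨hz₂v, he₂⟩ | ⟨hm₂, he₂⟩ | ⟨hm₂, he₂⟩
    · rw [hz₁v, hz₂v]
    · exact absurd (hTW he₂) (by rw [← heq, he₁]; exact hx)
    · exact absurd (hT'W he₂) (by rw [← heq, he₁]; exact hx)
    · exact absurd (hTW he₁) (by rw [heq, he₂]; exact hx)
    · exact hg.injOn hm₁ hm₂ (by rw [← hφNB z₁ hm₁, ← hφNB z₂ hm₂, heq])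
    · exact absurd he₁ (by rw [heq]; exact fun h => hT'T _ he₂ h)
    · exact absurd (hT'W he₁) (by rw [heq, he₂]; exact hx)
    · exact absurd he₂ (by rw [← heq]; exact fun h => hT'T _ he₁ h)
    · exact hg₂.injOn hm₁ hm₂ (by rw [← hφR z₁ hm₁, ← hφR z₂ hm₂, heq])
  obtain ⟨σ, hσ⟩ := exists_perm_extend hsfin hφinj
  -- the image circuit
  set C₀' := Sym2.map ⇑σ '' C₀ with hC₀'def
  obtain ⟨u', hu'NB, hu'w⟩ := hg.surjOn (Set.mem_insert w N)
  have hu'v : u' ≠ v := fun h => hvNB (h ▸ hu'NB)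
  have hσv : σ v = x := by rw [hσ v hv, hφv]
  have hσu' : σ u' = w := by rw [hσ u' (hNBsupp hu'NB), hφNB u' hu'NB, hu'w]
  have hestar : Sym2.map ⇑σ s(v, u') = s(x, w) := by
    rw [Sym2.map_pair_eq, hσv, hσu']
  have he'mem : s(x, w) ∈ C₀' := ⟨s(v, u'), hu'NB, hestar⟩
  -- C₀' minus the edge is independent, C₀' is dependent
  have hdep' : ¬ M.M.Indep C₀' := fun h => hC₀.2.1 ((indep_image_iff σ).1 h)
  have hdiff : C₀' \ {s(x, w)} = Sym2.map ⇑σ '' (C₀ \ {s(v, u')}) := by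
    rw [Set.image_diff (Sym2.map.injective σ.injective), Set.image_singleton, hestar]
  have hindep' : M.M.Indep (C₀' \ {s(x, w)}) := by
    rw [hdiff]
    exact (indep_image_iff σ).2 (hC₀.2.2 s(v, u') hu'NB)
  have hC₀'fin : C₀'.Finite := hC₀fin.image _
  -- the edge s(x,w) is spanned by C₀' \ {s(x,w)}
  have hspan : mrk M.M (insert s(x, w) (C₀' \ {s(x, w)})) = mrk M.M (C₀' \ {s(x, w)}) := by
    have h1 : insert s(x, w) (C₀' \ {s(x, w)}) = C₀' := Set.insert_diff_singleton.trans
      (Set.insert_eq_self.2 he'mem)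
    have h2 : mrk M.M (C₀' \ {s(x, w)}) = (C₀' \ {s(x, w)}).ncard :=
      hindep'.mrk_eq_ncard (hC₀'fin.diff)
    have h3 : mrk M.M C₀' < C₀'.ncard := mrk_lt_ncard_of_dep hC₀'fin hdep'
    have h4 : (C₀' \ {s(x, w)}).ncard = C₀'.ncard - 1 :=
      Set.ncard_diff_singleton_of_mem he'mem
    have h5 : mrk M.M (C₀' \ {s(x, w)}) ≤ mrk M.M C₀' :=
      mrk_mono Set.diff_subset hC₀'fin
    have h6 : 0 < C₀'.ncard := (Set.ncard_pos hC₀'fin).2 ⟨_, he'mem⟩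
    rw [h1]
    omega
  -- C₀' \ {s(x,w)} is contained in the clique together with the star
  have hsub' : C₀' \ {s(x, w)} ⊆ clique W ∪ (fun u => s(x, u)) '' N := by
    rintro e ⟨⟨f, hf, rfl⟩, hne⟩
    simp only [Set.mem_singleton_iff] at hne
    induction f with
    | _ a b =>
      have ha : a ∈ eSupp C₀ := ⟨s(a, b), hf, by simp⟩
      have hb : b ∈ eSupp C₀ := ⟨s(a, b), hf, by simp⟩
      have hab : a ≠ b := fun h => hC₀.1.2 _ hf (by simp [Sym2.mk_isDiag_iff, h])
      rw [Sym2.map_pair_eq]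
      by_cases hav : a = v
      · subst hav
        have hbNB : b ∈ NB := hf
        have hbu' : b ≠ u' := by
          rintro rfl
          exact hne (by rw [Sym2.map_pair_eq, hσv, hσu'])
        have hgb : g b ∈ N := by
          rcases hg.mapsTo hbNB with h | h
          · exact absurd (hg.injOn hbNB hu'NB (h.trans hu'w.symm)) hbu'
          · exact h
        refine Or.inr ⟨g b, hgb, ?_⟩
        rw [hσ a hv, hφv, hσ b (hNBsupp hbNB), hφNB b hbNB]
      · by_cases hbv : b = v
        · subst hbv
          have haNB : a ∈ NB := by
            have : s(b, a) ∈ C₀ := Sym2.eq_swap ▸ hf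
            exact this
          have hau' : a ≠ u' := by
            rintro rfl
            refine hne ?_
            rw [Sym2.map_pair_eq, hσ b hv, hφv, hσu']
            exact Sym2.eq_swap
          have hga : g a ∈ N := by
            rcases hg.mapsTo haNB with h | h
            · exact absurd (hg.injOn haNB hu'NB (h.trans hu'w.symm)) hau'
            · exact h
          refine Or.inr ⟨g a, hga, ?_⟩
          rw [hσ b hv, hφv, hσ a (hNBsupp haNB), hφNB a haNB]
          exact Sym2.eq_swap
        · -- both endpoints land in W
          have haW : σ a ∈ W := by
            rw [hσ a ha]
            rcases hclass a ha with ⟨h, -⟩ | ⟨-, h⟩ | ⟨-, h⟩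
            · exact absurd h hav
            · exact hTW h
            · exact hT'W h
          have hbW : σ b ∈ W := by
            rw [hσ b hb]
            rcases hclass b hb with ⟨h, -⟩ | ⟨-, h⟩ | ⟨-, h⟩
            · exact absurd h hbv
            · exact hTW h
            · exact hT'W h
          refine Or.inl ⟨?_, ?_⟩
          · rw [Sym2.mk_isDiag_iff]
            exact fun h => hab (σ.injective h)
          · intro z hz
            rcases Sym2.mem_iff.1 hz with rfl | rfl
            · exact haW
            · exact hbW
  -- conclude by monotonicity of spanning
  exact spans_mono hsub' ((clique_finite hWfin).union (star_finite hNfin x)) hspan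

end GraphMatroidFamily

namespace GraphMatroidFamily

open Set

variable {M : GraphMatroidFamily} {d t : ℕ}

lemma rk_def (M : GraphMatroidFamily) (E : Set (Sym2 ℕ)) : M.rk E = mrk M.M E := rfl

lemma dim_lt_threshold (hdim : M.IsDimensionality d) (hth : M.IsThreshold d t) :
    d + 1 ≤ t := by
  obtain ⟨C₀, hC₀, hmd, hsupp⟩ := hth.1
  have hC₀fin : C₀.Finite := hC₀.1.1
  have hsfin : (eSupp C₀).Finite := eSupp_finite hC₀fin
  have hsne : (eSupp C₀).Nonempty := eSupp_nonempty hC₀.nonempty'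
  obtain ⟨v, hv, hdegv⟩ := exists_deg_eq_minDeg hsne
  rw [hmd] at hdegv
  set NB := {u : ℕ | s(v, u) ∈ C₀} with hNBdef
  have hNBsupp : NB ⊆ eSupp C₀ := fun u hu => ⟨s(v, u), hu, by simp⟩
  have hNBfin : NB.Finite := hsfin.subset hNBsupp
  have hvNB : v ∉ NB := fun h => hC₀.1.2 _ h (by simp [Sym2.mk_isDiag_iff])
  have hEv : {e ∈ C₀ | v ∈ e} = (fun u => s(v, u)) '' NB := by
    ext f
    constructor
    · rintro ⟨hf, hvf⟩
      obtain ⟨u, rfl⟩ := Sym2.mem_iff_exists.1 hvf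
      exact ⟨u, hf, rfl⟩
    · rintro ⟨u, hu, rfl⟩
      exact ⟨hu, by simp⟩
  have hNBcard : NB.ncard = d + 1 := by
    have h1 := star_ncard (N := NB) v
    rw [deg_def, hEv, h1] at hdegv
    exact hdegv
  have h2 : (insert v NB).ncard = d + 2 := by
    rw [Set.ncard_insert_of_notMem hvNB hNBfin, hNBcard]
  have h3 : insert v NB ⊆ eSupp C₀ := Set.insert_subset hv hNBsupp
  have h4 := Set.ncard_le_ncard h3 hsfin
  omega

/-- Adding a new vertex to a clique of at least `t` vertices increases the rank of
anything by exactly `d`. -/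
lemma claimK_step (hdim : M.IsDimensionality d) (hth : M.IsThreshold d t)
    {X : Set (Sym2 ℕ)} (hX : X.Finite) (hgr : ∀ e ∈ X, ¬ e.IsDiag)
    {W : Set ℕ} (hWfin : W.Finite) (htW : t ≤ W.ncard) {x : ℕ} (hx : x ∉ W)
    (hxX : x ∉ eSupp X) :
    mrk M.M (X ∪ clique (insert x W)) = mrk M.M (X ∪ clique W) + d := by
  have hdW : d ≤ W.ncard := le_trans (by have := dim_lt_threshold hdim hth; omega) htW
  obtain ⟨N, hNW, hNd⟩ := Set.exists_subset_card_eq hdW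
  have hNfin : N.Finite := hWfin.subset hNW
  have hxN : x ∉ N := fun h => hx (hNW h)
  set A := X ∪ clique W with hAdef
  have hAfin : A.Finite := hX.union (clique_finite hWfin)
  have hAgr : ∀ e ∈ A, ¬ e.IsDiag := by
    rintro e (he | he)
    · exact hgr e he
    · exact he.1
  have hxA : x ∉ eSupp A := by
    rw [hAdef, eSupp_union]
    rintro (h | h)
    · exact hxX h
    · exact hx (eSupp_clique_subset W h)
  have h1 : mrk M.M (A ∪ (fun u => s(x, u)) '' N) = mrk M.M A + d := by
    rw [mrk_union_star hdim hAfin hAgr hxA hNfin (le_of_eq hNd) hxN, hNd]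
  have h2 : clique (insert x W) = clique W ∪ (fun u => s(x, u)) '' W := clique_insert hx
  have h3 : X ∪ clique (insert x W) = (A ∪ (fun u => s(x, u)) '' N) ∪ (fun u => s(x, u)) '' W := by
    rw [h2, hAdef, Set.union_assoc, Set.union_assoc,
      Set.union_eq_self_of_subset_left (Set.image_mono hNW)]
  have h4 : ∀ e ∈ (fun u => s(x, u)) '' W,
      mrk M.M (insert e (A ∪ (fun u => s(x, u)) '' N)) =
        mrk M.M (A ∪ (fun u => s(x, u)) '' N) := by
    rintro e ⟨u, hu, rfl⟩
    by_cases huN : u ∈ N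
    · have hmem : s(x, u) ∈ A ∪ (fun u => s(x, u)) '' N := Or.inr ⟨u, huN, rfl⟩
      rw [Set.insert_eq_self.2 hmem]
    · have habs := absorb_edge hdim hth hWfin htW hx hu hNW hNd huN
      refine spans_mono ?_ (hAfin.union (star_finite hNfin x)) habs
      rw [hAdef, Set.union_assoc]
      exact Set.subset_union_right
  rw [h3, mrk_union_eq_of_spans (hAfin.union (star_finite hNfin x)) (star_finite hWfin x) h4, h1]

/-- Iterated version: adding a set `F` of new vertices to a clique of at least `t`
vertices increases the rank of anything by exactly `d * |F|`. -/
lemma claimK (hdim : M.IsDimensionality d) (hth : M.IsThreshold d t)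
    {X : Set (Sym2 ℕ)} (hX : X.Finite) (hgr : ∀ e ∈ X, ¬ e.IsDiag)
    {W : Set ℕ} (hWfin : W.Finite) (htW : t ≤ W.ncard)
    {F : Set ℕ} (hFfin : F.Finite) (hFW : ∀ y ∈ F, y ∉ W) (hFX : ∀ y ∈ F, y ∉ eSupp X) :
    mrk M.M (X ∪ clique (W ∪ F)) = mrk M.M (X ∪ clique W) + d * F.ncard := by
  refine Set.Finite.induction_on (motive := fun F _ => F.Finite → (∀ y ∈ F, y ∉ W) →
      (∀ y ∈ F, y ∉ eSupp X) →
      mrk M.M (X ∪ clique (W ∪ F)) = mrk M.M (X ∪ clique W) + d * F.ncard) F hFfin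
    (by simp) ?_ hFfin hFW hFX
  intro y F' hyF' hF'fin ih _ hFW' hFX'
  have ih' := ih hF'fin (fun z hz => hFW' z (Set.mem_insert_of_mem _ hz))
    (fun z hz => hFX' z (Set.mem_insert_of_mem _ hz))
  have hyW : y ∉ W ∪ F' := by
    rintro (h | h)
    · exact hFW' y (Set.mem_insert _ _) h
    · exact hyF' h
  have hWF'fin : (W ∪ F').Finite := hWfin.union hF'fin
  have htWF' : t ≤ (W ∪ F').ncard :=
    le_trans htW (Set.ncard_le_ncard Set.subset_union_left hWF'fin)
  have hstep := claimK_step hdim hth hX hgr hWF'fin htWF' hyW (hFX' y (Set.mem_insert _ _))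
  have hset : W ∪ insert y F' = insert y (W ∪ F') := by
    rw [Set.union_insert]
  rw [hset, hstep, ih', Set.ncard_insert_of_notMem hyF' hF'fin]
  ring

lemma cliqueN_eq (n : ℕ) : cliqueN n = clique {v : ℕ | v < n} := rfl

lemma setIio_ncard (n : ℕ) : ({v : ℕ | v < n}).ncard = n := by
  have h1 : ({v : ℕ | v < n} : Set ℕ) = ↑(Finset.range n) := by ext v; simp
  rw [h1, Set.ncard_coe_finset, Finset.card_range]

lemma rho_mono (M : GraphMatroidFamily) {n m : ℕ} (h : n ≤ m) :
    mrk M.M (cliqueN n) ≤ mrk M.M (cliqueN m) := by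
  rw [cliqueN_eq, cliqueN_eq]
  exact mrk_mono (clique_mono (fun v hv => lt_of_lt_of_le hv h))
    (clique_finite (Set.finite_Iio m))

lemma rho_linear (hdim : M.IsDimensionality d) (hth : M.IsThreshold d t) {n : ℕ} (hn : t ≤ n) :
    mrk M.M (cliqueN n) = mrk M.M (cliqueN t) + d * (n - t) := by
  have hW : ({v : ℕ | v < t}).Finite := Set.finite_Iio t
  have hF : ({v : ℕ | t ≤ v ∧ v < n}).Finite := (Set.finite_Iio n).subset (fun v hv => hv.2)
  have hWF : {v : ℕ | v < t} ∪ {v : ℕ | t ≤ v ∧ v < n} = {v : ℕ | v < n} := by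
    ext v; simp only [Set.mem_union, Set.mem_setOf_eq]; omega
  have hFcard : ({v : ℕ | t ≤ v ∧ v < n}).ncard = n - t := by
    have h1 : ({v : ℕ | t ≤ v ∧ v < n} : Set ℕ) = ↑(Finset.Ico t n) := by ext v; simp
    rw [h1, Set.ncard_coe_finset, Nat.card_Ico]
  have := claimK (M := M) hdim hth (X := (∅ : Set (Sym2 ℕ))) finite_empty (by simp)
    hW (le_of_eq (setIio_ncard t).symm) hF (fun y hy => by simp at hy ⊢; omega)
    (fun y hy => by simp)
  rw [Set.empty_union, Set.empty_union, hWF, hFcard] at this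
  rw [cliqueN_eq, cliqueN_eq, this]

lemma d_pos (hu : M.Unbounded) (hdim : M.IsDimensionality d) (hth : M.IsThreshold d t) :
    0 < d := by
  by_contra h
  push_neg at h
  interval_cases d
  obtain ⟨n, hn⟩ := hu (M.rk (cliqueN t))
  rw [rk_def, rk_def] at hn
  rcases le_or_gt n t with hle | hlt
  · exact absurd (rho_mono M hle) (by omega)
  · have := rho_linear (M := M) hdim hth (le_of_lt hlt)
    omega

lemma rho_lb (hu : M.Unbounded) (hdim : M.IsDimensionality d) (hth : M.IsThreshold d t) :
    ∀ k : ℕ, k ≤ mrk M.M (cliqueN k) + 1 := by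
  have hd := d_pos hu hdim hth
  intro k
  induction k with
  | zero => omega
  | succ k ih =>
    rcases Nat.eq_zero_or_pos k with rfl | hk
    · omega
    have hstep : mrk M.M (cliqueN k) + 1 ≤ mrk M.M (cliqueN (k + 1)) := by
      have hWfin : ({v : ℕ | v < k}).Finite := Set.finite_Iio k
      have hkS : k ∉ eSupp (cliqueN k) := by
        intro h
        have := eSupp_clique_subset _ h
        simp at this
      have hne : s(k, 0) ∉ cliqueN k := by
        intro h
        have := h.2 k (by simp)
        simp at this
      have hfr := mrk_insert_fresh (M := M) hdim (X := cliqueN k) (clique_finite hWfin)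
        (fun e he => he.1) (x := k) (y := 0) (by omega)
        (by rw [deg_eq_zero_of_not_mem_eSupp hkS]; omega) hne
      have hsub : insert s(k, 0) (cliqueN k) ⊆ cliqueN (k + 1) := by
        rintro e (rfl | he)
        · refine ⟨by rw [Sym2.mk_isDiag_iff]; omega, ?_⟩
          intro v hv
          have h2 : v = k ∨ v = 0 := Sym2.mem_iff.1 hv
          show v ∈ {u : ℕ | u < k + 1}
          simp only [Set.mem_setOf_eq]
          omega
        · refine ⟨he.1, fun v hv => ?_⟩
          have h2 := he.2 v hv
          simp only [Set.mem_setOf_eq] at h2 ⊢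
          omega
      calc mrk M.M (cliqueN k) + 1 = mrk M.M (insert s(k, 0) (cliqueN k)) := hfr.symm
      _ ≤ mrk M.M (cliqueN (k + 1)) := mrk_mono hsub (clique_finite (Set.finite_Iio (k + 1)))
    omega

end GraphMatroidFamily

namespace GraphMatroidFamily

open Set

variable {M : GraphMatroidFamily} {d t : ℕ}

/-- The gluing lemma: local connectivity through at most `k ≥ t` shared vertices is
at most `r(K_k)`. -/
lemma gluing (hdim : M.IsDimensionality d) (hth : M.IsThreshold d t)
    {E₁ E₂ : Set (Sym2 ℕ)} (h₁fin : E₁.Finite) (h₁gr : ∀ e ∈ E₁, ¬ e.IsDiag)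
    (h₂fin : E₂.Finite) (h₂gr : ∀ e ∈ E₂, ¬ e.IsDiag)
    {S : Set ℕ} (hSfin : S.Finite) (hcap : eSupp E₁ ∩ eSupp E₂ ⊆ S)
    {k : ℕ} (hk : t ≤ k) (hSk : S.ncard ≤ k) :
    mrk M.M E₁ + mrk M.M E₂ ≤ mrk M.M (E₁ ∪ E₂) + mrk M.M (cliqueN k) := by
  classical
  have hV₁fin : (eSupp E₁).Finite := eSupp_finite h₁fin
  have hV₂fin : (eSupp E₂).Finite := eSupp_finite h₂fin
  -- pad `S` with fresh vertices to exactly `k` vertices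
  have hbigfin : (S ∪ eSupp E₁ ∪ eSupp E₂).Finite := (hSfin.union hV₁fin).union hV₂fin
  have hinf : ((S ∪ eSupp E₁ ∪ eSupp E₂)ᶜ : Set ℕ).Infinite := hbigfin.infinite_compl
  obtain ⟨Fp, hFpsub, hFpfin, hFpcard⟩ := hinf.exists_subset_ncard_eq (k - S.ncard)
  set S'' := S ∪ Fp with hS''def
  have hdisj : Disjoint S Fp := by
    rw [Set.disjoint_right]
    intro z hz
    exact fun hzS => (hFpsub hz) (Or.inl (Or.inl hzS))
  have hS''fin : S''.Finite := hSfin.union hFpfin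
  have hS''card : S''.ncard = k := by
    rw [hS''def, Set.ncard_union_eq hdisj hSfin hFpfin, hFpcard]
    omega
  -- apply Claim K with the new vertices `eSupp E₁ \ S''`
  set F := eSupp E₁ \ S'' with hFdef
  have hFfin : F.Finite := hV₁fin.diff
  have hFS'' : ∀ y ∈ F, y ∉ S'' := fun y hy => hy.2
  have hFV₂ : ∀ y ∈ F, y ∉ eSupp E₂ := by
    intro y hy hyV₂
    exact hy.2 (Or.inl (hcap ⟨hy.1, hyV₂⟩))
  have htS'' : t ≤ S''.ncard := by omega
  have hK2 := claimK (M := M) hdim hth h₂fin h₂gr hS''fin htS'' hFfin hFS'' hFV₂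
  have hK0 := claimK (M := M) hdim hth (X := (∅ : Set (Sym2 ℕ))) finite_empty (by simp)
    hS''fin htS'' hFfin hFS'' (by simp)
  rw [Set.empty_union, Set.empty_union] at hK0
  set Wf := S'' ∪ F with hWfdef
  have hWffin : Wf.Finite := hS''fin.union hFfin
  have hE₁W : E₁ ⊆ clique Wf := by
    intro e he
    refine ⟨h₁gr e he, fun z hz => ?_⟩
    have hzV₁ : z ∈ eSupp E₁ := ⟨e, he, hz⟩
    by_cases hzS : z ∈ S''
    · exact Or.inl hzS
    · exact Or.inr ⟨hzV₁, hzS⟩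
  -- submodularity step
  have hsubmod : mrk M.M (E₂ ∪ clique Wf) + mrk M.M E₁ ≤
      mrk M.M (E₁ ∪ E₂) + mrk M.M (clique Wf) := by
    have hsm := mrk_submod (M₀ := M.M) (X := E₁ ∪ E₂) (Y := clique Wf)
      (h₁fin.union h₂fin) (clique_finite hWffin)
    have hu1 : (E₁ ∪ E₂) ∪ clique Wf = E₂ ∪ clique Wf := by
      rw [Set.union_right_comm, Set.union_eq_self_of_subset_left hE₁W, Set.union_comm]
    have hu2 : E₁ ⊆ (E₁ ∪ E₂) ∩ clique Wf :=
      Set.subset_inter Set.subset_union_left hE₁W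
    have hu3 : mrk M.M E₁ ≤ mrk M.M ((E₁ ∪ E₂) ∩ clique Wf) :=
      mrk_mono hu2 (((h₁fin.union h₂fin)).inter_of_left _)
    rw [hu1] at hsm
    omega
  have hmono2 : mrk M.M E₂ ≤ mrk M.M (E₂ ∪ clique S'') :=
    mrk_mono Set.subset_union_left (h₂fin.union (clique_finite hS''fin))
  have hrho : mrk M.M (clique S'') = mrk M.M (cliqueN k) := by
    rw [mrk_clique_eq_rho hS''fin, hS''card]
  rw [hrho] at hK0
  omega

/-- A side of a partition missing a covered vertex is not spanning. -/
lemma nonspanning (hdim : M.IsDimensionality d) (hdpos : 0 < d) {G X : Set (Sym2 ℕ)}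
    (hGfin : G.Finite) (hGgr : ∀ e ∈ G, ¬ e.IsDiag) (hXG : X ⊆ G) {a : ℕ}
    (ha : a ∈ eSupp G) (haX : a ∉ eSupp X) :
    mrk M.M X + 1 ≤ mrk M.M G := by
  obtain ⟨e, heG, hae⟩ := ha
  obtain ⟨y, rfl⟩ := Sym2.mem_iff_exists.1 hae
  have hay : a ≠ y := by
    have := hGgr _ heG
    rwa [Sym2.mk_isDiag_iff] at this
  have hnotX : s(a, y) ∉ X := fun h => haX ⟨_, h, by simp⟩
  have hfr := mrk_insert_fresh (M := M) hdim (hGfin.subset hXG)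
    (fun f hf => hGgr f (hXG hf)) hay
    (by rw [deg_eq_zero_of_not_mem_eSupp haX]; omega) hnotX
  have hmono := mrk_mono (M₀ := M.M) (Set.insert_subset heG hXG) hGfin
  omega

/-- Main contradiction: a partition of `G` into two non-spanning sides meeting in at
most `k` vertices contradicts vertical `(r(K_k)+2)`-connectivity. -/
lemma sep_contradiction (hdim : M.IsDimensionality d) (hth : M.IsThreshold d t)
    {G : Set (Sym2 ℕ)} (hG : IsGraph G) {k : ℕ} (hk : t ≤ k)
    (hvc : VerticallyConnected (M.M.restrict G) (M.rk (cliqueN k) + 2))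
    {E₁ : Set (Sym2 ℕ)} (hE₁G : E₁ ⊆ G)
    {S : Set ℕ} (hSfin : S.Finite) (hSk : S.ncard ≤ k)
    (hcap : eSupp E₁ ∩ eSupp (G \ E₁) ⊆ S)
    (hr₁ : mrk M.M E₁ < mrk M.M G) (hr₂ : mrk M.M (G \ E₁) < mrk M.M G) : False := by
  have hGfin : G.Finite := hG.1
  set E₂ := G \ E₁ with hE₂def
  have hE₂G : E₂ ⊆ G := Set.diff_subset
  have hunion : E₁ ∪ E₂ = G := Set.union_diff_cancel hE₁G
  have hdis : Disjoint E₁ E₂ := Set.disjoint_sdiff_right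
  have h₁fin : E₁.Finite := hGfin.subset hE₁G
  have h₂fin : E₂.Finite := hGfin.subset hE₂G
  have hsub : mrk M.M G ≤ mrk M.M E₁ + mrk M.M E₂ := by
    have := mrk_union_le (M₀ := M.M) h₁fin h₂fin
    rwa [hunion] at this
  have hglue : mrk M.M E₁ + mrk M.M E₂ ≤ mrk M.M G + mrk M.M (cliqueN k) := by
    have := gluing (M := M) hdim hth h₁fin (fun e he => hG.2 e (hE₁G he)) h₂fin
      (fun e he => hG.2 e (hE₂G he)) hSfin hcap hk hSk
    rwa [hunion] at this
  set k' := mrk M.M E₁ + mrk M.M E₂ + 1 - mrk M.M G with hk'def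
  have hk'pos : 0 < k' := by omega
  have hk'lt : k' < M.rk (cliqueN k) + 2 := by
    rw [rk_def]
    omega
  refine hvc.2 k' hk'pos hk'lt E₁ E₂ ?_
  refine ⟨hdis, ?_, ?_, ?_, ?_⟩
  · rw [Matroid.restrict_ground_eq]
    exact hunion
  · rw [mrk_restrict_eq hE₁G]
    omega
  · rw [mrk_restrict_eq hE₂G]
    omega
  · rw [mrk_restrict_eq hE₁G, mrk_restrict_eq hE₂G, Matroid.restrict_ground_eq,
      mrk_restrict_eq (subset_refl G)]
    omega

end GraphMatroidFamily

/-- Let `G` be a graph (without isolated vertices) and `M` a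
nontrivial, unbounded graph matroid family with rank function `r`, dimensionality `d`,
and threshold `t`.  Let `k ≥ t`.  If `M(G)` is vertically `(r(K_k) + 2)`-connected,
then `G` is `(k+1)`-connected. -/
theorem vertically_connected_to_connected (M : GraphMatroidFamily) (d t : ℕ)
    (hu : M.Unbounded) (hnt : ¬ M.Trivial)
    (hd : M.IsDimensionality d) (ht : M.IsThreshold d t)
    (G : Set (Sym2 ℕ)) (hG : IsGraph G) (k : ℕ) (hk : t ≤ k)
    (hvc : VerticallyConnected (M.M.restrict G) (M.rk (cliqueN k) + 2)) :
    KConnected (k + 1) G := by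
  classical
  have hdpos := GraphMatroidFamily.d_pos hu hd ht
  have hGfin : G.Finite := hG.1
  have hVfin : (eSupp G).Finite := eSupp_finite hGfin
  have hvc1 : mrk M.M (cliqueN k) + 2 ≤ mrk M.M G := by
    have h := hvc.1
    rwa [Matroid.restrict_ground_eq, mrk_restrict_eq (subset_refl G),
      GraphMatroidFamily.rk_def] at h
  have hrk_le : mrk M.M G ≤ mrk M.M (cliqueN ((eSupp G).ncard)) :=
    le_trans (mrk_mono (subset_clique_eSupp hG.2) (clique_finite hVfin))
      (le_of_eq (GraphMatroidFamily.mrk_clique_eq_rho hVfin))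
  have hrho_lb := GraphMatroidFamily.rho_lb hu hd ht
  -- Part 1: G has more than k + 1 vertices.
  have hpart1 : k + 1 < (eSupp G).ncard := by
    by_contra hle
    push_neg at hle
    rcases le_or_gt (eSupp G).ncard k with hsmall | hbig
    · have h1 := GraphMatroidFamily.rho_mono M hsmall
      omega
    · have hcard : (eSupp G).ncard = k + 1 := by omega
      have hne : (eSupp G).Nonempty := (Set.ncard_pos hVfin).1 (by omega)
      obtain ⟨a, ha⟩ := hne
      set E₁ := {e ∈ G | a ∈ e} with hE₁def
      have hE₁G : E₁ ⊆ G := fun e he => he.1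
      have haE₂ : a ∉ eSupp (G \ E₁) := by
        rintro ⟨e, ⟨heG, heE₁⟩, hae⟩
        exact heE₁ ⟨heG, hae⟩
      have hr₂ : mrk M.M (G \ E₁) < mrk M.M G := by
        have := GraphMatroidFamily.nonspanning (M := M) hd hdpos hGfin hG.2
          Set.diff_subset ha haE₂
        omega
      have hE₁sub : E₁ ⊆ (fun u => s(a, u)) '' (eSupp G \ {a}) := by
        rintro e ⟨heG, hae⟩
        obtain ⟨y, rfl⟩ := Sym2.mem_iff_exists.1 hae
        have hay : a ≠ y := by
          have := hG.2 _ heG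
          rwa [Sym2.mk_isDiag_iff] at this
        exact ⟨y, ⟨⟨_, heG, by simp⟩, fun h => hay (Set.mem_singleton_iff.1 h).symm⟩, rfl⟩
      have h3 : (eSupp G \ {a}).ncard = k := by
        rw [Set.ncard_diff_singleton_of_mem ha, hcard]
        omega
      have hr₁ : mrk M.M E₁ < mrk M.M G := by
        have h1 : mrk M.M E₁ ≤ E₁.ncard := mrk_le_ncard (hGfin.subset hE₁G)
        have h2 : E₁.ncard ≤ (eSupp G \ {a}).ncard :=
          le_trans (Set.ncard_le_ncard hE₁sub ((hVfin.diff).image _))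
            (le_of_eq (star_ncard a))
        have := hrho_lb k
        omega
      have hcap : eSupp E₁ ∩ eSupp (G \ E₁) ⊆ eSupp G \ {a} := by
        rintro z ⟨h1, h2⟩
        refine ⟨eSupp_mono hE₁G h1, ?_⟩
        intro hz
        rw [Set.mem_singleton_iff] at hz
        subst hz
        exact haE₂ h2
      exact GraphMatroidFamily.sep_contradiction hd ht hG hk hvc hE₁G (hVfin.diff)
        (le_of_eq h3) hcap hr₁ hr₂
  refine ⟨hpart1, ?_⟩
  -- Part 2: removal of at most k vertices leaves a connected graph.
  intro S hScard
  by_contra hncon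
  have hSk : (↑S : Set ℕ).ncard ≤ k := by
    rw [Set.ncard_coe_finset]
    omega
  have hVS : (eSupp G \ ↑S).Nonempty := by
    rw [Set.nonempty_iff_ne_empty]
    intro h
    have hsub : eSupp G ⊆ ↑S := by rwa [Set.diff_eq_empty] at h
    have hle := Set.ncard_le_ncard hsub (S.finite_toSet)
    rw [Set.ncard_coe_finset] at hle
    omega
  have hnonempty : Nonempty ↥(eSupp G \ ↑S) := hVS.to_subtype
  rw [SimpleGraph.connected_iff] at hncon
  push_neg at hncon
  have hnpc : ¬ ((SimpleGraph.fromEdgeSet G).induce (eSupp G \ ↑S)).Preconnected :=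
    fun hpc => (not_nonempty_iff.mpr (hncon hpc)) hnonempty
  simp only [SimpleGraph.Preconnected, not_forall] at hnpc
  obtain ⟨u, v, hnr⟩ := hnpc
  set H := (SimpleGraph.fromEdgeSet G).induce (eSupp G \ ↑S) with hHdef
  set Aset := {z : ℕ | ∃ hz : z ∈ eSupp G \ ↑S, H.Reachable u ⟨z, hz⟩} with hAdef
  set E₁ := {e ∈ G | ∃ z ∈ e, z ∈ Aset} with hE₁def
  have hE₁G : E₁ ⊆ G := fun e he => he.1
  have hAext : ∀ x y : ℕ, s(x, y) ∈ G → x ∈ Aset → y ∉ (↑S : Set ℕ) → y ∈ Aset := by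
    intro x y hxyG hxA hyS
    obtain ⟨hxmem, hreach⟩ := hxA
    have hyG : y ∈ eSupp G := ⟨_, hxyG, by simp⟩
    have hymem : y ∈ eSupp G \ ↑S := ⟨hyG, hyS⟩
    have hxy : x ≠ y := by
      have := hG.2 _ hxyG
      rwa [Sym2.mk_isDiag_iff] at this
    have hadj : H.Adj ⟨x, hxmem⟩ ⟨y, hymem⟩ := by
      rw [hHdef]
      simp only [SimpleGraph.comap_adj, Function.Embedding.coe_subtype,
        SimpleGraph.fromEdgeSet_adj]
      exact ⟨hxyG, hxy⟩
    exact ⟨hymem, hreach.trans hadj.reachable⟩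
  have hsuppE₁ : eSupp E₁ ⊆ Aset ∪ ↑S := by
    rintro z ⟨e, ⟨heG, w, hwe, hwA⟩, hze⟩
    obtain ⟨w', rfl⟩ := Sym2.mem_iff_exists.1 hwe
    rcases Sym2.mem_iff.1 hze with rfl | rfl
    · exact Or.inl hwA
    · by_cases hzS : z ∈ (↑S : Set ℕ)
      · exact Or.inr hzS
      · exact Or.inl (hAext w z heG hwA hzS)
  have hAdisj : ∀ z ∈ Aset, z ∉ eSupp (G \ E₁) := by
    rintro z hz ⟨e, ⟨heG, heE₁⟩, hze⟩
    exact heE₁ ⟨heG, z, hze, hz⟩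
  have haA : (u : ℕ) ∈ Aset := ⟨u.2, by rw [Subtype.coe_eta]⟩
  have haG : (u : ℕ) ∈ eSupp G := u.2.1
  have hbG : (v : ℕ) ∈ eSupp G := v.2.1
  have hbA : (v : ℕ) ∉ Aset := by
    rintro ⟨hz, hreach⟩
    rw [Subtype.coe_eta] at hreach
    exact hnr hreach
  have hbS : (v : ℕ) ∉ (↑S : Set ℕ) := v.2.2
  have hbE₁ : (v : ℕ) ∉ eSupp E₁ := by
    intro h
    rcases hsuppE₁ h with h' | h'
    · exact hbA h'
    · exact hbS h'
  have hr₁ : mrk M.M E₁ < mrk M.M G := by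
    have := GraphMatroidFamily.nonspanning (M := M) hd hdpos hGfin hG.2 hE₁G hbG hbE₁
    omega
  have hr₂ : mrk M.M (G \ E₁) < mrk M.M G := by
    have := GraphMatroidFamily.nonspanning (M := M) hd hdpos hGfin hG.2
      Set.diff_subset haG (hAdisj _ haA)
    omega
  have hcap : eSupp E₁ ∩ eSupp (G \ E₁) ⊆ (↑S : Set ℕ) := by
    rintro z ⟨h1, h2⟩
    rcases hsuppE₁ h1 with hA | hS
    · exact absurd h2 (hAdisj z hA)
    · exact hS
  exact GraphMatroidFamily.sep_contradiction hd ht hG hk hvc hE₁G (S.finite_toSet)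
    hSk hcap hr₁ hr₂
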